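/- For the complete graph K_n with n ≥ 2, F_+(K_n) = n − 2. -/

import Mathlib

open SimpleGraph

variable {V : Type*}

/-- One step of the standard zero forcing color-change rule: a blue vertex `u`
whose unique white neighbor is `v` forces `v` to become blue. -/
def zfStep (G : SimpleGraph V) (B : Set V) : Set V :=
  B ∪ {v | v ∉ B ∧ ∃ u ∈ B, G.Adj u v ∧ ∀ w, G.Adj u w → w ∉ B → w = v}

/-- `S` is a zero forcing set: iterating the standard color-change rule from `S`
eventually colors every vertex blue. -/
def IsZeroForcingSet (G : SimpleGraph V) (S : Set V) : Prop :=
  (⋃ n, (zfStep G)^[n] S) = Set.univ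

/-- The failed zero forcing number `F(G)`: the maximum cardinality of a set that
is not a zero forcing set. -/
noncomputable def failedZF (G : SimpleGraph V) : ℕ :=
  sSup {n | ∃ S : Set V, ¬ IsZeroForcingSet G S ∧ S.ncard = n}

/-- The zero forcing number `Z(G)`. -/
noncomputable def zfNumber (G : SimpleGraph V) : ℕ :=
  sInf {n | ∃ S : Set V, IsZeroForcingSet G S ∧ S.ncard = n}

/-- One step of the positive semidefinite color-change rule. -/
def psdStep (G : SimpleGraph V) (B : Set V) : Set V :=
  B ∪ {v | ∃ (hv : v ∉ B), ∃ u ∈ B, G.Adj u v ∧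
        ∀ (w : V) (hw : w ∉ B), G.Adj u w →
          (G.induce {x | x ∉ B}).Reachable ⟨w, hw⟩ ⟨v, hv⟩ → w = v}

/-- `S` is a positive semidefinite zero forcing set. -/
def IsPSDZeroForcingSet (G : SimpleGraph V) (S : Set V) : Prop :=
  (⋃ n, (psdStep G)^[n] S) = Set.univ

/-- The failed positive semidefinite zero forcing number `F₊(G)`. -/
noncomputable def failedPSD (G : SimpleGraph V) : ℕ :=
  sSup {n | ∃ S : Set V, ¬ IsPSDZeroForcingSet G S ∧ S.ncard = n}

/-- The positive semidefinite zero forcing number `Z₊(G)`. -/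
noncomputable def psdZFNumber (G : SimpleGraph V) : ℕ :=
  sInf {n | ∃ S : Set V, IsPSDZeroForcingSet G S ∧ S.ncard = n}

/-- For `n ≥ 2`, `F₊(Kₙ) = n − 2`. -/

lemma psd_fixed {n : ℕ} {S : Set (Fin n)} (h : 2 ≤ Sᶜ.ncard) :
    psdStep (⊤ : SimpleGraph (Fin n)) S = S := by
  unfold psdStep
  ext v
  simp only [Set.mem_union, Set.mem_setOf_eq]
  constructor
  · rintro (hv | ⟨hv, u, hu, hadj, hforce⟩)
    · exact hv
    · exfalso
      obtain ⟨w, hw, hwv⟩ := Set.exists_ne_of_one_lt_ncard (s := Sᶜ) (by omega) v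
      have hw' : w ∉ S := hw
      have hadjw : (⊤ : SimpleGraph (Fin n)).Adj u w := by
        simp only [top_adj]
        rintro rfl; exact hw' hu
      have hreach : ((⊤ : SimpleGraph (Fin n)).induce {x | x ∉ S}).Reachable ⟨w, hw'⟩ ⟨v, hv⟩ := by
        refine SimpleGraph.Adj.reachable ?_
        simp only [SimpleGraph.comap_adj, top_adj, Function.Embedding.coe_subtype]
        exact fun hh => hwv hh
      exact hwv (hforce w hw' hadjw hreach)
  · exact Or.inl

lemma psd_not_force {n : ℕ} {S : Set (Fin n)} (h : 2 ≤ Sᶜ.ncard) :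
    ¬ IsPSDZeroForcingSet (⊤ : SimpleGraph (Fin n)) S := by
  have hfix : ∀ k, (psdStep (⊤ : SimpleGraph (Fin n)))^[k] S = S := by
    intro k
    induction k with
    | zero => rfl
    | succ k ih => rw [Function.iterate_succ_apply', ih, psd_fixed h]
  intro hforce
  unfold IsPSDZeroForcingSet at hforce
  simp only [hfix, Set.iUnion_const] at hforce
  obtain ⟨v, hv⟩ := Set.nonempty_of_ncard_ne_zero (s := Sᶜ) (by omega)
  exact hv (hforce ▸ Set.mem_univ v)

lemma psd_force {n : ℕ} (hn : 2 ≤ n) {S : Set (Fin n)} (h : n - 1 ≤ S.ncard) :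
    IsPSDZeroForcingSet (⊤ : SimpleGraph (Fin n)) S := by
  have hcard : S.ncard + Sᶜ.ncard = n := by
    simpa using Set.ncard_add_ncard_compl S
  have h1 : Sᶜ.ncard ≤ 1 := by omega
  rcases Nat.le_one_iff_eq_zero_or_eq_one.mp h1 with h0 | h1
  · have hS : S = Set.univ := by
      have : Sᶜ = ∅ := (Set.ncard_eq_zero (Set.toFinite _)).mp h0
      simpa [Set.compl_empty_iff] using this
    refine Set.eq_univ_iff_forall.mpr fun x => Set.mem_iUnion.mpr ⟨0, ?_⟩
    simp [hS]
  · obtain ⟨v, hv⟩ := Set.ncard_eq_one.mp h1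
    have hstep : ∀ x, x ∈ psdStep (⊤ : SimpleGraph (Fin n)) S := by
      intro x
      by_cases hx : x ∈ S
      · exact Or.inl hx
      · have hxv : x = v := by
          have : x ∈ Sᶜ := hx
          rw [hv] at this; exact this
        subst hxv
        obtain ⟨u, hu⟩ := Set.nonempty_of_ncard_ne_zero (s := S) (by omega)
        refine Or.inr ⟨hx, u, hu, ?_, ?_⟩
        · simp only [top_adj]
          rintro rfl; exact hx hu
        · intro w hw _ _
          have : w ∈ Sᶜ := hw
          rw [hv] at this; exact this
    refine Set.eq_univ_iff_forall.mpr fun x => Set.mem_iUnion.mpr ⟨1, ?_⟩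
    simpa using hstep x

theorem failedPSD_completeGraph (n : ℕ) (hn : 2 ≤ n) :
    failedPSD (⊤ : SimpleGraph (Fin n)) = n - 2 := by
  have hset : {k | ∃ S : Set (Fin n), ¬ IsPSDZeroForcingSet (⊤ : SimpleGraph (Fin n)) S ∧ S.ncard = k}
      = Set.Iic (n - 2) := by
    ext k
    simp only [Set.mem_setOf_eq, Set.mem_Iic]
    constructor
    · rintro ⟨S, hS, rfl⟩
      by_contra hk
      push_neg at hk
      have hcard : S.ncard + Sᶜ.ncard = n := by
        simpa using Set.ncard_add_ncard_compl S
      exact hS (psd_force hn (by omega))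
    · intro hk
      obtain ⟨S, -, hScard⟩ := Set.exists_subset_card_eq (s := (Set.univ : Set (Fin n))) (n := k)
        (by rw [Set.ncard_univ]; simpa using hk.trans (Nat.sub_le n 2))
      have hcard : S.ncard + Sᶜ.ncard = n := by
        simpa using Set.ncard_add_ncard_compl S
      exact ⟨S, psd_not_force (by omega), hScard⟩
  unfold failedPSD
  rw [hset]
  exact csSup_Iic
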